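/- arXiv:1102.3290 — 2 statements merged into one kernel-verified Lean document; each statement's English description precedes it below -/
import Mathlib

section
/- For every integer n ≥ 0, ω_3(n,0) − ω_3(n,2) = (1/4)·cos(πn) + (1/2)·cos(πn/2) + 1/4, where cos is the real cosine function. -/
open Real

/-- `ω_d(n,k)`: the number of tuples `(α₀,…,α_d)` of non-negative integers with
`α₁ + 2α₂ + ⋯ + d·α_d = (dn−k)/2` and `α₀ + α₁ + ⋯ + α_d = n`; it is `0` when
`(dn−k)/2` is not a non-negative integer (here encoded by `2·Σ i·αᵢ + k = d·n`). -/
noncomputable def omega (d n k : ℕ) : ℕ :=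
  {α : Fin (d + 1) → ℕ |
    2 * (∑ i : Fin (d + 1), (i : ℕ) * α i) + k = d * n ∧ ∑ i, α i = n}.ncard

/-- The finset of pairs `(b,c) = (α₂,α₃)` parametrizing `ω₃(2t, 2u)`. -/
def Afin (t u : ℕ) : Finset (ℕ × ℕ) :=
  (Finset.range (3 * t + 1) ×ˢ Finset.range (t + 1)).filter
    fun p => 2 * p.1 + 3 * p.2 + u ≤ 3 * t ∧ t ≤ p.1 + 2 * p.2 + u

lemma sum_weight (α : Fin 4 → ℕ) :
    (∑ i : Fin 4, (i : ℕ) * α i) = α 1 + 2 * α 2 + 3 * α 3 := by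
  rw [Fin.sum_univ_four]
  norm_num

lemma sum_plain (α : Fin 4 → ℕ) :
    (∑ i : Fin 4, α i) = α 0 + α 1 + α 2 + α 3 := by
  simp [Fin.sum_univ_four]

lemma omega_odd (j k : ℕ) (hk : k % 2 = 0) : omega 3 (2 * j + 1) k = 0 := by
  have : {α : Fin (3 + 1) → ℕ |
      2 * (∑ i : Fin (3 + 1), (i : ℕ) * α i) + k = 3 * (2 * j + 1) ∧
        ∑ i, α i = 2 * j + 1} = ∅ := by
    ext α
    simp only [Set.mem_setOf_eq, Set.mem_empty_iff_false, iff_false, not_and]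
    intro h1
    omega
  rw [omega, this, Set.ncard_empty]

lemma omega_even (t u : ℕ) : omega 3 (2 * t) (2 * u) = (Afin t u).card := by
  classical
  set S : Set (Fin 4 → ℕ) :=
    {α : Fin (3 + 1) → ℕ |
      2 * (∑ i : Fin (3 + 1), (i : ℕ) * α i) + 2 * u = 3 * (2 * t) ∧
        ∑ i, α i = 2 * t} with hS
  have hinj : Set.InjOn (fun α : Fin 4 → ℕ => (α 2, α 3)) S := by
    intro α hα β hβ h
    obtain ⟨h1, h2⟩ := hα
    obtain ⟨h3, h4⟩ := hβ
    rw [sum_weight] at h1 h3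
    rw [sum_plain] at h2 h4
    have e2 : α 2 = β 2 := congrArg Prod.fst h
    have e3 : α 3 = β 3 := congrArg Prod.snd h
    have e1 : α 1 = β 1 := by omega
    have e0 : α 0 = β 0 := by omega
    funext i
    fin_cases i <;> assumption
  have himg : (fun α : Fin 4 → ℕ => (α 2, α 3)) '' S = ↑(Afin t u) := by
    ext p
    simp only [Set.mem_image, Finset.coe_filter, Afin, Finset.mem_coe,
      Finset.mem_filter, Finset.mem_product, Finset.mem_range, Set.mem_setOf_eq]
    constructor
    · rintro ⟨α, ⟨h1, h2⟩, rfl⟩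
      rw [sum_weight] at h1
      rw [sum_plain] at h2
      refine ⟨⟨by omega, by omega⟩, by omega, by omega⟩
    · rintro ⟨⟨hb, hc⟩, h1, h2⟩
      refine ⟨![2 * t - (3 * t - u - 2 * p.1 - 3 * p.2) - p.1 - p.2,
        3 * t - u - 2 * p.1 - 3 * p.2, p.1, p.2], ⟨?_, ?_⟩, rfl⟩
      · rw [sum_weight]
        simp only [Matrix.cons_val_zero, Matrix.cons_val_one, Matrix.head_cons, Matrix.cons_val_two,
          Matrix.tail_cons, Matrix.cons_val_three]
        omega
      · rw [sum_plain]
        simp only [Matrix.cons_val_zero, Matrix.cons_val_one, Matrix.head_cons,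
          Matrix.cons_val_two, Matrix.tail_cons, Matrix.cons_val_three]
        omega
  have := Set.ncard_image_of_injOn hinj
  rw [himg, Set.ncard_coe_finset] at this
  rw [omega, ← hS, ← this]

lemma sdiff_A_B (t : ℕ) :
    Afin t 0 \ Afin t 1 =
      (Finset.range (t / 2 + 1)).image fun j => (3 * j, t - 2 * j) := by
  ext p
  simp only [Finset.mem_sdiff, Afin, Finset.mem_filter, Finset.mem_product,
    Finset.mem_range, Finset.mem_image, not_and, not_le, and_imp]
  constructor
  · rintro ⟨⟨⟨hb, hc⟩, h1, h2⟩, h3⟩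
    have h4 : 2 * p.1 + 3 * p.2 = 3 * t := by
      by_contra h
      have := h3 hb hc
      omega
    have hd : 2 ∣ (t - p.2) := by omega
    obtain ⟨j, hj⟩ := hd
    exact ⟨j, by omega, by
      have : p.1 = 3 * j := by omega
      have : p.2 = t - 2 * j := by omega
      cases p
      simp_all⟩
  · rintro ⟨j, hj, rfl⟩
    refine ⟨⟨⟨by omega, by omega⟩, by omega, by omega⟩, ?_⟩
    intro _ _ h
    omega

lemma sdiff_B_A (t : ℕ) :
    Afin t 1 \ Afin t 0 =
      (Finset.range ((t + 1) / 2)).image fun c => (t - 1 - 2 * c, c) := by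
  ext p
  simp only [Finset.mem_sdiff, Afin, Finset.mem_filter, Finset.mem_product,
    Finset.mem_range, Finset.mem_image, not_and, not_le, and_imp]
  constructor
  · rintro ⟨⟨⟨hb, hc⟩, h1, h2⟩, h3⟩
    have h4 : p.1 + 2 * p.2 + 1 = t := by
      by_contra h
      have := h3 hb hc
      omega
    exact ⟨p.2, by omega, by
      cases p
      simp_all
      omega⟩
  · rintro ⟨c, hc, rfl⟩
    refine ⟨⟨⟨by omega, by omega⟩, by omega, by omega⟩, ?_⟩
    intro _ _ h
    omega

lemma card_sdiff_A_B (t : ℕ) : (Afin t 0 \ Afin t 1).card = t / 2 + 1 := by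
  rw [sdiff_A_B, Finset.card_image_of_injective _ (fun a b h => by
    have := congrArg Prod.fst h
    simpa using by omega), Finset.card_range]

lemma card_sdiff_B_A (t : ℕ) : (Afin t 1 \ Afin t 0).card = (t + 1) / 2 := by
  rw [sdiff_B_A, Finset.card_image_of_injective _ (fun a b h => by
    have := congrArg Prod.snd h
    simpa using this), Finset.card_range]

lemma card_diff (t : ℕ) :
    (Afin t 0).card + (t + 1) / 2 = (Afin t 1).card + (t / 2 + 1) := by
  have h1 := Finset.card_sdiff_add_card (Afin t 0) (Afin t 1)
  have h2 := Finset.card_sdiff_add_card (Afin t 1) (Afin t 0)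
  rw [Finset.union_comm] at h2
  rw [card_sdiff_A_B] at h1
  rw [card_sdiff_B_A] at h2
  omega

/-- The Hilbert polynomial of the algebra of invariants of the binary form of degree 3. -/
theorem hilbert_polynomial_binary_form_deg_three (n : ℕ) :
    (omega 3 n 0 : ℝ) - (omega 3 n 2 : ℝ) =
      (1 / 4) * Real.cos (π * n) + (1 / 2) * Real.cos (π * n / 2) + 1 / 4 := by
  rcases Nat.even_or_odd n with ⟨t, ht⟩ | ⟨j, hj⟩
  · -- n = 2t
    have hn : n = 2 * t := by omega
    subst hn
    have h0 : omega 3 (2 * t) 0 = (Afin t 0).card := by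
      have := omega_even t 0
      simpa using this
    have h2 : omega 3 (2 * t) 2 = (Afin t 1).card := by
      have := omega_even t 1
      simpa using this
    rw [h0, h2]
    have hcard := card_diff t
    rcases Nat.even_or_odd t with ⟨s, hs⟩ | ⟨s, hs⟩
    · -- t = 2s, difference = 1
      have hts : t = 2 * s := by omega
      subst hts
      have hdiv1 : (2 * s) / 2 = s := by omega
      have hdiv2 : (2 * s + 1) / 2 = s := by omega
      rw [hdiv1, hdiv2] at hcard
      have hL : ((Afin (2 * s) 0).card : ℝ) - ((Afin (2 * s) 1).card : ℝ) = 1 := by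
        have : (Afin (2 * s) 0).card = (Afin (2 * s) 1).card + 1 := by omega
        rw [this]
        push_cast
        ring
      rw [hL]
      have e1 : π * ((2 * (2 * s) : ℕ) : ℝ) = (2 * s : ℕ) * (2 * π) := by
        push_cast; ring
      have e2 : π * ((2 * (2 * s) : ℕ) : ℝ) / 2 = (s : ℕ) * (2 * π) := by
        push_cast; ring
      rw [e2, e1, Real.cos_nat_mul_two_pi, Real.cos_nat_mul_two_pi]
      norm_num
    · -- t = 2s+1, difference = 0
      have hts : t = 2 * s + 1 := by omega
      subst hts
      have hdiv1 : (2 * s + 1) / 2 = s := by omega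
      have hdiv2 : (2 * s + 1 + 1) / 2 = s + 1 := by omega
      rw [hdiv1, hdiv2] at hcard
      have hL : ((Afin (2 * s + 1) 0).card : ℝ) - ((Afin (2 * s + 1) 1).card : ℝ) = 0 := by
        have : (Afin (2 * s + 1) 0).card = (Afin (2 * s + 1) 1).card := by omega
        rw [this]
        ring
      rw [hL]
      have e1 : π * ((2 * (2 * s + 1) : ℕ) : ℝ) = ((2 * s + 1 : ℕ) : ℝ) * (2 * π) := by
        push_cast; ring
      have e2 : π * ((2 * (2 * s + 1) : ℕ) : ℝ) / 2 = (s : ℕ) * (2 * π) + π := by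
        push_cast; ring
      rw [e2, e1, Real.cos_nat_mul_two_pi, Real.cos_add_pi, Real.cos_nat_mul_two_pi]
      norm_num
  · -- n odd
    have hn : n = 2 * j + 1 := hj
    subst hn
    rw [omega_odd j 0 rfl, omega_odd j 2 rfl]
    have e1 : π * ((2 * j + 1 : ℕ) : ℝ) = ((j : ℕ) : ℝ) * (2 * π) + π := by
      push_cast; ring
    have e2 : π * ((2 * j + 1 : ℕ) : ℝ) / 2 = ((j : ℕ) : ℝ) * π + π / 2 := by
      push_cast; ring
    rw [e2, e1, Real.cos_add_pi, Real.cos_nat_mul_two_pi, Real.cos_add_pi_div_two,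
      Real.sin_nat_mul_pi]
    norm_num
end

section
/- For every integer n ≥ 0, ω_4(n,0) − ω_4(n,2) = (1/6)·n + (1/4)·cos(πn) + (1/3)·cos(2πn/3) − (√3/9)·sin(2πn/3) + 5/12, where cos and sin are the real cosine and sine functions. -/
open Real

def T0 (n : ℕ) : Set (ℕ × ℕ × ℕ) :=
  {p | 2*p.1 + 3*p.2.1 + 4*p.2.2 ≤ 2*n ∧ n ≤ p.1 + 2*p.2.1 + 3*p.2.2}
def T2' (n : ℕ) : Set (ℕ × ℕ × ℕ) :=
  {p | 2*p.1 + 3*p.2.1 + 4*p.2.2 + 1 ≤ 2*n ∧ n ≤ p.1 + 2*p.2.1 + 3*p.2.2 + 1}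
def Csol (n : ℕ) : Set (ℕ × ℕ) := {q | 2*q.1 + 3*q.2 = n}
def D1 (n : ℕ) : Set (ℕ × ℕ × ℕ) := {p | 2*p.1 + 3*p.2.1 + 4*p.2.2 = 2*n}
def D2 (n : ℕ) : Set (ℕ × ℕ × ℕ) := {p | p.1 + 2*p.2.1 + 3*p.2.2 + 1 = n}
def D1a (n : ℕ) : Set (ℕ × ℕ × ℕ) := {p | 2*p.1 + 3*p.2.1 + 4*p.2.2 = 2*n ∧ 1 ≤ p.1}
def D1b (n : ℕ) : Set (ℕ × ℕ × ℕ) := {p | 2*p.1 + 3*p.2.1 + 4*p.2.2 = 2*n ∧ p.1 = 0}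
def CsA (n : ℕ) : Set (ℕ × ℕ) := {q | 2*q.1 + 3*q.2 = n ∧ 2 ≤ q.2}
def CsB (n : ℕ) : Set (ℕ × ℕ) := {q | 2*q.1 + 3*q.2 = n ∧ q.2 ≤ 1}

lemma finite_of_bdd3 {s : Set (ℕ×ℕ×ℕ)} (m : ℕ)
    (h : ∀ p ∈ s, p.1 ≤ m ∧ p.2.1 ≤ m ∧ p.2.2 ≤ m) : s.Finite := by
  apply Set.Finite.subset ((Set.finite_Iic m).prod ((Set.finite_Iic m).prod (Set.finite_Iic m)))
  intro p hp
  exact ⟨(h p hp).1, (h p hp).2.1, (h p hp).2.2⟩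

lemma finite_of_bdd2 {s : Set (ℕ×ℕ)} (m : ℕ)
    (h : ∀ p ∈ s, p.1 ≤ m ∧ p.2 ≤ m) : s.Finite := by
  apply Set.Finite.subset ((Set.finite_Iic m).prod (Set.finite_Iic m))
  intro p hp
  exact ⟨(h p hp).1, (h p hp).2⟩

lemma sum_five (α : Fin (4+1) → ℕ) :
    ∑ i : Fin (4+1), (i:ℕ) * α i = α 1 + 2*α 2 + 3*α 3 + 4*α 4 := by
  simp [Fin.sum_univ_five, show ((3:Fin 5):ℕ)=3 from rfl, show ((4:Fin 5):ℕ)=4 from rfl]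

lemma sum_five' (α : Fin (4+1) → ℕ) :
    ∑ i, α i = α 0 + α 1 + α 2 + α 3 + α 4 := by
  simp [Fin.sum_univ_five]

lemma omega40_eq (n : ℕ) : omega 4 n 0 = (T0 n).ncard := by
  have hb : Set.BijOn (fun α : Fin (4+1) → ℕ => (α 2, α 3, α 4))
      {α : Fin (4 + 1) → ℕ |
        2 * (∑ i : Fin (4 + 1), (i : ℕ) * α i) + 0 = 4 * n ∧ ∑ i, α i = n} (T0 n) := by
    refine ⟨?_, ?_, ?_⟩
    · rintro α ⟨h1, h2⟩
      rw [sum_five] at h1; rw [sum_five'] at h2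
      simp only [T0, Set.mem_setOf_eq]
      try dsimp only
      omega
    · rintro α ⟨h1, h2⟩ β ⟨h3, h4⟩ heq
      rw [sum_five] at h1 h3; rw [sum_five'] at h2 h4
      simp only [Prod.mk.injEq] at heq
      obtain ⟨e2, e3, e4⟩ := heq
      funext i
      fin_cases i <;> simp_all <;> omega
    · rintro ⟨x, y, z⟩ ⟨h1, h2⟩
      try dsimp only at h1 h2
      refine ⟨![x + 2*y + 3*z - n, 2*n - (2*x + 3*y + 4*z), x, y, z], ?_, rfl⟩
      refine ⟨?_, ?_⟩
      · rw [sum_five]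
        simp only [Matrix.cons_val_one, Matrix.head_cons, Matrix.cons_val_two, Matrix.tail_cons,
          Matrix.cons_val_three, Matrix.cons_val_four, Matrix.cons_val_zero]
        omega
      · rw [sum_five']
        simp only [Matrix.cons_val_zero, Matrix.cons_val_one, Matrix.head_cons,
          Matrix.cons_val_two, Matrix.tail_cons, Matrix.cons_val_three, Matrix.cons_val_four]
        omega
  rw [omega, ← hb.image_eq, Set.ncard_image_of_injOn hb.injOn]

lemma omega42_eq (n : ℕ) : omega 4 n 2 = (T2' n).ncard := by
  have hb : Set.BijOn (fun α : Fin (4+1) → ℕ => (α 2, α 3, α 4))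
      {α : Fin (4 + 1) → ℕ |
        2 * (∑ i : Fin (4 + 1), (i : ℕ) * α i) + 2 = 4 * n ∧ ∑ i, α i = n} (T2' n) := by
    refine ⟨?_, ?_, ?_⟩
    · rintro α ⟨h1, h2⟩
      rw [sum_five] at h1; rw [sum_five'] at h2
      simp only [T2', Set.mem_setOf_eq]
      try dsimp only
      omega
    · rintro α ⟨h1, h2⟩ β ⟨h3, h4⟩ heq
      rw [sum_five] at h1 h3; rw [sum_five'] at h2 h4
      simp only [Prod.mk.injEq] at heq
      obtain ⟨e2, e3, e4⟩ := heq
      funext i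
      fin_cases i <;> simp_all <;> omega
    · rintro ⟨x, y, z⟩ ⟨h1, h2⟩
      try dsimp only at h1 h2
      refine ⟨![x + 2*y + 3*z + 1 - n, 2*n - (2*x + 3*y + 4*z) - 1, x, y, z], ?_, rfl⟩
      refine ⟨?_, ?_⟩
      · rw [sum_five]
        simp only [Matrix.cons_val_one, Matrix.head_cons, Matrix.cons_val_two, Matrix.tail_cons,
          Matrix.cons_val_three, Matrix.cons_val_four, Matrix.cons_val_zero]
        omega
      · rw [sum_five']
        simp only [Matrix.cons_val_zero, Matrix.cons_val_one, Matrix.head_cons,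
          Matrix.cons_val_two, Matrix.tail_cons, Matrix.cons_val_three, Matrix.cons_val_four]
        omega
  rw [omega, ← hb.image_eq, Set.ncard_image_of_injOn hb.injOn]

lemma T0_finite (n : ℕ) : (T0 n).Finite := by
  apply finite_of_bdd3 (2*n)
  rintro ⟨x,y,z⟩ ⟨h1, h2⟩
  try dsimp only at h1 h2 ⊢
  omega

lemma T2'_finite (n : ℕ) : (T2' n).Finite := by
  apply finite_of_bdd3 (2*n)
  rintro ⟨x,y,z⟩ ⟨h1, h2⟩
  try dsimp only at h1 h2 ⊢
  omega

lemma Csol_finite (n : ℕ) : (Csol n).Finite := by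
  apply finite_of_bdd2 n
  rintro ⟨a,b⟩ h
  simp only [Csol, Set.mem_setOf_eq] at h
  try dsimp only at h ⊢
  omega

lemma D1_finite (n : ℕ) : (D1 n).Finite := by
  apply finite_of_bdd3 (2*n)
  rintro ⟨x,y,z⟩ h
  simp only [D1, Set.mem_setOf_eq] at h
  try dsimp only at h ⊢
  omega

lemma diff1 (n : ℕ) : T0 n \ T2' n = D1 n := by
  ext ⟨x,y,z⟩
  simp only [T0, T2', D1, Set.mem_diff, Set.mem_setOf_eq, not_and, not_le]
  try dsimp only
  omega

lemma diff2 (n : ℕ) : T2' n \ T0 n = D2 n := by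
  ext ⟨x,y,z⟩
  simp only [T0, T2', D2, Set.mem_diff, Set.mem_setOf_eq, not_and, not_le]
  try dsimp only
  omega

lemma D1_card (n : ℕ) : (D1 n).ncard = (D2 n).ncard + (Csol n).ncard := by
  have hsplit : D1 n = D1a n ∪ D1b n := by
    ext ⟨x,y,z⟩
    simp only [D1, D1a, D1b, Set.mem_union, Set.mem_setOf_eq]
    try dsimp only
    omega
  have hdisj : Disjoint (D1a n) (D1b n) := by
    rw [Set.disjoint_left]
    rintro p ⟨_, h1⟩ ⟨_, h2⟩
    omega
  have hAf : (D1a n).Finite := (D1_finite n).subset (fun p hp => hp.1)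
  have hBf : (D1b n).Finite := (D1_finite n).subset (fun p hp => hp.1)
  have hbA : Set.BijOn (fun p : ℕ×ℕ×ℕ => (p.1 - 1, p.2.2, p.2.1 / 2)) (D1a n) (D2 n) := by
    refine ⟨?_, ?_, ?_⟩
    · rintro ⟨x,y,z⟩ ⟨h1, h2⟩
      simp only [D2, Set.mem_setOf_eq]
      try dsimp only at h1 h2 ⊢
      omega
    · rintro ⟨x,y,z⟩ ⟨h1, h2⟩ ⟨x',y',z'⟩ ⟨h3, h4⟩ heq
      simp only [Prod.mk.injEq] at heq
      try dsimp only at h1 h2 h3 h4 heq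
      obtain ⟨e1, e2, e3⟩ := heq
      simp only [Prod.mk.injEq]
      omega
    · rintro ⟨a,b,c⟩ h
      simp only [D2, Set.mem_setOf_eq] at h
      try dsimp only at h
      refine ⟨(a+1, 2*c, b), ⟨?_, ?_⟩, ?_⟩
      · try dsimp only; omega
      · try dsimp only; omega
      · simp only [Prod.ext_iff, true_and, and_true]
        omega
  have hbB : Set.BijOn (fun p : ℕ×ℕ×ℕ => (p.2.2, p.2.1 / 2)) (D1b n) (Csol n) := by
    refine ⟨?_, ?_, ?_⟩
    · rintro ⟨x,y,z⟩ ⟨h1, h2⟩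
      simp only [Csol, Set.mem_setOf_eq]
      try dsimp only at h1 h2 ⊢
      omega
    · rintro ⟨x,y,z⟩ ⟨h1, h2⟩ ⟨x',y',z'⟩ ⟨h3, h4⟩ heq
      simp only [Prod.mk.injEq] at heq
      try dsimp only at h1 h2 h3 h4 heq
      obtain ⟨e1, e2⟩ := heq
      simp only [Prod.mk.injEq]
      omega
    · rintro ⟨a,b⟩ h
      simp only [Csol, Set.mem_setOf_eq] at h
      try dsimp only at h
      refine ⟨(0, 2*b, a), ⟨?_, ?_⟩, ?_⟩
      · try dsimp only; omega
      · rfl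
      · simp only [Prod.ext_iff, true_and, and_true]
        omega
  rw [hsplit, Set.ncard_union_eq hdisj hAf hBf, ← hbA.image_eq,
    Set.ncard_image_of_injOn hbA.injOn, ← hbB.image_eq, Set.ncard_image_of_injOn hbB.injOn]

lemma omega_diff (n : ℕ) : omega 4 n 0 = omega 4 n 2 + (Csol n).ncard := by
  rw [omega40_eq, omega42_eq]
  have h0 : (T0 n).ncard = (T0 n ∩ T2' n).ncard + (T0 n \ T2' n).ncard := by
    rw [Set.ncard_inter_add_ncard_diff_eq_ncard _ _ (T0_finite n)]
  have h2 : (T2' n).ncard = (T2' n ∩ T0 n).ncard + (T2' n \ T0 n).ncard := by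
    rw [Set.ncard_inter_add_ncard_diff_eq_ncard _ _ (T2'_finite n)]
  rw [h0, h2, diff1, diff2, Set.inter_comm, D1_card]
  ring

lemma Csol_step (n : ℕ) : (Csol (n+6)).ncard = (Csol n).ncard + 1 := by
  have hsplit : Csol (n+6) = CsA (n+6) ∪ CsB (n+6) := by
    ext ⟨a,b⟩
    simp only [Csol, CsA, CsB, Set.mem_union, Set.mem_setOf_eq]
    try dsimp only
    omega
  have hdisj : Disjoint (CsA (n+6)) (CsB (n+6)) := by
    rw [Set.disjoint_left]
    rintro q ⟨_, h1⟩ ⟨_, h2⟩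
    omega
  have hAf : (CsA (n+6)).Finite := (Csol_finite (n+6)).subset (fun q hq => hq.1)
  have hBf : (CsB (n+6)).Finite := (Csol_finite (n+6)).subset (fun q hq => hq.1)
  have hbA : Set.BijOn (fun q : ℕ×ℕ => (q.1, q.2 - 2)) (CsA (n+6)) (Csol n) := by
    refine ⟨?_, ?_, ?_⟩
    · rintro ⟨a,b⟩ ⟨h1, h2⟩
      simp only [Csol, Set.mem_setOf_eq]
      try dsimp only at h1 h2 ⊢
      omega
    · rintro ⟨a,b⟩ ⟨h1, h2⟩ ⟨a',b'⟩ ⟨h3, h4⟩ heq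
      simp only [Prod.mk.injEq] at heq ⊢
      try dsimp only at h1 h2 h3 h4 heq
      omega
    · rintro ⟨a,b⟩ h
      simp only [Csol, Set.mem_setOf_eq] at h
      try dsimp only at h
      refine ⟨(a, b+2), ⟨?_, ?_⟩, ?_⟩
      · try dsimp only; omega
      · try dsimp only; omega
      · simp only [Prod.ext_iff, true_and, and_true]
        omega
  have hBcard : (CsB (n+6)).ncard = 1 := by
    rcases Nat.even_or_odd n with he | ho
    · obtain ⟨k, hk⟩ := he
      have : CsB (n+6) = {((n+6)/2, 0)} := by
        ext ⟨a,b⟩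
        simp only [CsB, Set.mem_setOf_eq, Set.mem_singleton_iff, Prod.mk.injEq]
        try dsimp only
        omega
      rw [this, Set.ncard_singleton]
    · obtain ⟨k, hk⟩ := ho
      have : CsB (n+6) = {((n+3)/2, 1)} := by
        ext ⟨a,b⟩
        simp only [CsB, Set.mem_setOf_eq, Set.mem_singleton_iff, Prod.mk.injEq]
        try dsimp only
        omega
      rw [this, Set.ncard_singleton]
  rw [hsplit, Set.ncard_union_eq hdisj hAf hBf, hBcard,
    ← hbA.image_eq, Set.ncard_image_of_injOn hbA.injOn]

lemma Csol_card (n : ℕ) : (Csol n).ncard = n / 6 + (if n % 6 = 1 then 0 else 1) := by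
  induction n using Nat.strong_induction_on with
  | _ n ih =>
    match n, ih with
    | 0, _ =>
      have h : Csol 0 = {(0,0)} := by
        ext ⟨a,b⟩
        simp only [Csol, Set.mem_setOf_eq, Set.mem_singleton_iff, Prod.mk.injEq]
        try dsimp only
        omega
      rw [h, Set.ncard_singleton]; norm_num
    | 1, _ =>
      have h : Csol 1 = ∅ := by
        ext ⟨a,b⟩
        simp only [Csol, Set.mem_setOf_eq, Set.mem_empty_iff_false, iff_false]
        try dsimp only
        omega
      rw [h, Set.ncard_empty]; norm_num
    | 2, _ =>
      have h : Csol 2 = {(1,0)} := by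
        ext ⟨a,b⟩
        simp only [Csol, Set.mem_setOf_eq, Set.mem_singleton_iff, Prod.mk.injEq]
        try dsimp only
        omega
      rw [h, Set.ncard_singleton]; norm_num
    | 3, _ =>
      have h : Csol 3 = {(0,1)} := by
        ext ⟨a,b⟩
        simp only [Csol, Set.mem_setOf_eq, Set.mem_singleton_iff, Prod.mk.injEq]
        try dsimp only
        omega
      rw [h, Set.ncard_singleton]; norm_num
    | 4, _ =>
      have h : Csol 4 = {(2,0)} := by
        ext ⟨a,b⟩
        simp only [Csol, Set.mem_setOf_eq, Set.mem_singleton_iff, Prod.mk.injEq]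
        try dsimp only
        omega
      rw [h, Set.ncard_singleton]; norm_num
    | 5, _ =>
      have h : Csol 5 = {(1,1)} := by
        ext ⟨a,b⟩
        simp only [Csol, Set.mem_setOf_eq, Set.mem_singleton_iff, Prod.mk.injEq]
        try dsimp only
        omega
      rw [h, Set.ncard_singleton]; norm_num
    | (m+6), ih =>
      rw [Csol_step, ih m (by omega)]
      split_ifs <;> omega

lemma c23 : Real.cos (2*π/3) = -(1/2) := by
  rw [show (2*π/3 : ℝ) = π - π/3 by ring, Real.cos_pi_sub, Real.cos_pi_div_three]
lemma s23 : Real.sin (2*π/3) = Real.sqrt 3 / 2 := by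
  rw [show (2*π/3 : ℝ) = π - π/3 by ring, Real.sin_pi_sub, Real.sin_pi_div_three]
lemma c43 : Real.cos (4*π/3) = -(1/2) := by
  rw [show (4*π/3 : ℝ) = π/3 + π by ring, Real.cos_add_pi, Real.cos_pi_div_three]
lemma s43 : Real.sin (4*π/3) = -(Real.sqrt 3 / 2) := by
  rw [show (4*π/3 : ℝ) = π/3 + π by ring, Real.sin_add_pi, Real.sin_pi_div_three]


/-- The Hilbert polynomial of the algebra of invariants of the binary form of degree 4. -/
theorem hilbert_polynomial_binary_form_deg_four (n : ℕ) :
    (omega 4 n 0 : ℝ) - (omega 4 n 2 : ℝ) =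
      (1 / 6) * n + (1 / 4) * Real.cos (π * n) + (1 / 3) * Real.cos (2 * π * n / 3)
        - (Real.sqrt 3 / 9) * Real.sin (2 * π * n / 3) + 5 / 12 := by
  have h3 : Real.sqrt 3 * Real.sqrt 3 = 3 := Real.mul_self_sqrt (by norm_num)
  rw [omega_diff n, Csol_card n]
  have hcut : n % 6 = 0 ∨ n % 6 = 1 ∨ n % 6 = 2 ∨ n % 6 = 3 ∨ n % 6 = 4 ∨ n % 6 = 5 := by
    omega
  rcases hcut with h | h | h | h | h | h
  · have hn : n = 6*(n/6) + 0 := by omega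
    have hnR : (n:ℝ) = 6*((n/6 : ℕ):ℝ) + 0 := by exact_mod_cast congrArg (Nat.cast (R := ℝ)) hn
    have E1 : π * (n:ℝ) = 0 + ((3*(n/6) : ℕ):ℝ) * (2*π) := by rw [hnR]; push_cast; ring
    have E2 : 2 * π * (n:ℝ) / 3 = 0 + ((2*(n/6) : ℕ):ℝ) * (2*π) := by rw [hnR]; push_cast; ring
    rw [h]
    rw [if_neg (by norm_num)]
    push_cast
    rw [E1, E2, Real.cos_add_nat_mul_two_pi, Real.cos_add_nat_mul_two_pi,
      Real.sin_add_nat_mul_two_pi]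
    simp only [Real.cos_zero, Real.sin_zero, Real.cos_pi, c23, s23, c43, s43]
    rw [hnR]
    ring
  · have hn : n = 6*(n/6) + 1 := by omega
    have hnR : (n:ℝ) = 6*((n/6 : ℕ):ℝ) + 1 := by exact_mod_cast congrArg (Nat.cast (R := ℝ)) hn
    have E1 : π * (n:ℝ) = π + ((3*(n/6) : ℕ):ℝ) * (2*π) := by rw [hnR]; push_cast; ring
    have E2 : 2 * π * (n:ℝ) / 3 = 2*π/3 + ((2*(n/6) : ℕ):ℝ) * (2*π) := by rw [hnR]; push_cast; ring
    rw [h]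
    rw [if_pos rfl]
    push_cast
    rw [E1, E2, Real.cos_add_nat_mul_two_pi, Real.cos_add_nat_mul_two_pi,
      Real.sin_add_nat_mul_two_pi]
    simp only [Real.cos_zero, Real.sin_zero, Real.cos_pi, c23, s23, c43, s43]
    rw [hnR]
    linear_combination (1/18 : ℝ) * h3
  · have hn : n = 6*(n/6) + 2 := by omega
    have hnR : (n:ℝ) = 6*((n/6 : ℕ):ℝ) + 2 := by exact_mod_cast congrArg (Nat.cast (R := ℝ)) hn
    have E1 : π * (n:ℝ) = 0 + ((3*(n/6)+1 : ℕ):ℝ) * (2*π) := by rw [hnR]; push_cast; ring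
    have E2 : 2 * π * (n:ℝ) / 3 = 4*π/3 + ((2*(n/6) : ℕ):ℝ) * (2*π) := by rw [hnR]; push_cast; ring
    rw [h]
    rw [if_neg (by norm_num)]
    push_cast
    rw [E1, E2, Real.cos_add_nat_mul_two_pi, Real.cos_add_nat_mul_two_pi,
      Real.sin_add_nat_mul_two_pi]
    simp only [Real.cos_zero, Real.sin_zero, Real.cos_pi, c23, s23, c43, s43]
    rw [hnR]
    linear_combination (-(1/18) : ℝ) * h3
  · have hn : n = 6*(n/6) + 3 := by omega
    have hnR : (n:ℝ) = 6*((n/6 : ℕ):ℝ) + 3 := by exact_mod_cast congrArg (Nat.cast (R := ℝ)) hn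
    have E1 : π * (n:ℝ) = π + ((3*(n/6)+1 : ℕ):ℝ) * (2*π) := by rw [hnR]; push_cast; ring
    have E2 : 2 * π * (n:ℝ) / 3 = 0 + ((2*(n/6)+1 : ℕ):ℝ) * (2*π) := by rw [hnR]; push_cast; ring
    rw [h]
    rw [if_neg (by norm_num)]
    push_cast
    rw [E1, E2, Real.cos_add_nat_mul_two_pi, Real.cos_add_nat_mul_two_pi,
      Real.sin_add_nat_mul_two_pi]
    simp only [Real.cos_zero, Real.sin_zero, Real.cos_pi, c23, s23, c43, s43]
    rw [hnR]
    ring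
  · have hn : n = 6*(n/6) + 4 := by omega
    have hnR : (n:ℝ) = 6*((n/6 : ℕ):ℝ) + 4 := by exact_mod_cast congrArg (Nat.cast (R := ℝ)) hn
    have E1 : π * (n:ℝ) = 0 + ((3*(n/6)+2 : ℕ):ℝ) * (2*π) := by rw [hnR]; push_cast; ring
    have E2 : 2 * π * (n:ℝ) / 3 = 2*π/3 + ((2*(n/6)+1 : ℕ):ℝ) * (2*π) := by rw [hnR]; push_cast; ring
    rw [h]
    rw [if_neg (by norm_num)]
    push_cast
    rw [E1, E2, Real.cos_add_nat_mul_two_pi, Real.cos_add_nat_mul_two_pi,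
      Real.sin_add_nat_mul_two_pi]
    simp only [Real.cos_zero, Real.sin_zero, Real.cos_pi, c23, s23, c43, s43]
    rw [hnR]
    linear_combination (1/18 : ℝ) * h3
  · have hn : n = 6*(n/6) + 5 := by omega
    have hnR : (n:ℝ) = 6*((n/6 : ℕ):ℝ) + 5 := by exact_mod_cast congrArg (Nat.cast (R := ℝ)) hn
    have E1 : π * (n:ℝ) = π + ((3*(n/6)+2 : ℕ):ℝ) * (2*π) := by rw [hnR]; push_cast; ring
    have E2 : 2 * π * (n:ℝ) / 3 = 4*π/3 + ((2*(n/6)+1 : ℕ):ℝ) * (2*π) := by rw [hnR]; push_cast; ring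
    rw [h]
    rw [if_neg (by norm_num)]
    push_cast
    rw [E1, E2, Real.cos_add_nat_mul_two_pi, Real.cos_add_nat_mul_two_pi,
      Real.sin_add_nat_mul_two_pi]
    simp only [Real.cos_zero, Real.sin_zero, Real.cos_pi, c23, s23, c43, s43]
    rw [hnR]
    linear_combination (-(1/18) : ℝ) * h3
end
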